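/- Let m ∈ ℕ, let x, x' ∈ X_m, and set y = x + x' ∈ Y_m. Then |𝔖(x)| + |𝔖(x')| ≤ 2·|𝔉(y)|, with equality if and only if 𝔖(x) ∪ 𝔖(x') = R(y) and 𝔖(x) ∩ 𝔖(x') = R_0(y). -/
import Mathlib


open Finset

/-- `X_m`: sequences `(x_0,…,x_m)` in `ℕ` with `x i ≤ x (i+1)` and `x i < x (i+2)`. -/
def IsX (m : ℕ) (x : ℕ → ℕ) : Prop :=
  (∀ i, i < m → x i ≤ x (i + 1)) ∧ (∀ i, i + 2 ≤ m → x i < x (i + 2))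

/-- `Y_m`: sequences with `y i ≤ y (i+1)` and `y i + 2 ≤ y (i+2)`. -/
def IsY (m : ℕ) (y : ℕ → ℕ) : Prop :=
  (∀ i, i < m → y i ≤ y (i + 1)) ∧ (∀ i, i + 2 ≤ m → y i + 2 ≤ y (i + 2))

/-- `ℰ_m`: weakly increasing sequences. -/
def IsE (m : ℕ) (e : ℕ → ℕ) : Prop := ∀ i, i < m → e i ≤ e (i + 1)

/-- `𝔖(x)`: indices `i ∈ [0,m]` with `x (i-1) < x i < x (i+1)`,
with conventions `x_{-1} = -∞`, `x_{m+1} = +∞`. -/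
def SS (m : ℕ) (x : ℕ → ℕ) : Finset ℕ :=
  (Finset.range (m + 1)).filter
    (fun i => (i = 0 ∨ x (i - 1) < x i) ∧ (i = m ∨ x i < x (i + 1)))

/-- `𝔉(y)`: intervals `[i,j] ⊆ [0,m]` with
`y_{i-1}-(i-1) < y_i-i = ⋯ = y_j-j < y_{j+1}-(j+1)` (conventions `±∞` at the ends),
encoded as pairs `(i, j)`. -/
def FF (m : ℕ) (y : ℕ → ℕ) : Finset (ℕ × ℕ) :=
  ((Finset.range (m + 1)) ×ˢ (Finset.range (m + 1))).filter
    (fun p => p.1 ≤ p.2 ∧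
      (p.1 = 0 ∨ ((y (p.1 - 1) : ℤ) - ((p.1 : ℤ) - 1) < (y p.1 : ℤ) - (p.1 : ℤ))) ∧
      (p.2 = m ∨ ((y p.2 : ℤ) - (p.2 : ℤ) < (y (p.2 + 1) : ℤ) - ((p.2 : ℤ) + 1))) ∧
      (∀ k ∈ Finset.Ico p.1 p.2, ((y k : ℤ) - (k : ℤ) = (y (k + 1) : ℤ) - ((k : ℤ) + 1))))

/-- `𝔉'(y)`: the intervals in `𝔉(y)` of odd cardinality. -/
def FF' (m : ℕ) (y : ℕ → ℕ) : Finset (ℕ × ℕ) :=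
  (FF m y).filter (fun p => Odd (p.2 - p.1 + 1))

/-- `R(y)`: endpoints of intervals in `𝔉(y)`. -/
def RR (m : ℕ) (y : ℕ → ℕ) : Finset ℕ :=
  (Finset.range (m + 1)).filter (fun k => ∃ p ∈ FF m y, k = p.1 ∨ k = p.2)

/-- `R_0(y)`: those `k` with `[k,k] ∈ 𝔉(y)`. -/
def RR0 (m : ℕ) (y : ℕ → ℕ) : Finset ℕ :=
  (Finset.range (m + 1)).filter (fun k => (k, k) ∈ FF m y)

/-- `S(y)`: pairs `(x, x') ∈ X_m × X_m` with `x + x' = y`,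
`𝔖(x) ∪ 𝔖(x') = R(y)`, `𝔖(x) ∩ 𝔖(x') = R_0(y)`, and `𝔖(x') = ∅` if `𝔉'(y) = ∅`. -/
def IsS (m : ℕ) (y x x' : ℕ → ℕ) : Prop :=
  IsX m x ∧ IsX m x' ∧ (∀ i, i ≤ m → x i + x' i = y i) ∧
  SS m x ∪ SS m x' = RR m y ∧ SS m x ∩ SS m x' = RR0 m y ∧
  (FF' m y = ∅ → SS m x' = ∅)


lemma mem_FF_iff {m : ℕ} {y : ℕ → ℕ} {p : ℕ × ℕ} :
    p ∈ FF m y ↔ p.2 ≤ m ∧ p.1 ≤ p.2 ∧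
      (p.1 = 0 ∨ (y (p.1 - 1) : ℤ) - ((p.1 : ℤ) - 1) < (y p.1 : ℤ) - p.1) ∧
      (p.2 = m ∨ (y p.2 : ℤ) - p.2 < (y (p.2 + 1) : ℤ) - ((p.2 : ℤ) + 1)) ∧
      (∀ k ∈ Finset.Ico p.1 p.2, (y k : ℤ) - k = (y (k + 1) : ℤ) - ((k : ℤ) + 1)) := by
  unfold FF
  simp only [Finset.mem_filter, Finset.mem_product, Finset.mem_range]
  constructor
  · rintro ⟨⟨h1, h2⟩, h3, h4, h5, h6⟩; exact ⟨by omega, h3, h4, h5, h6⟩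
  · rintro ⟨h2, h3, h4, h5, h6⟩; exact ⟨⟨by omega, by omega⟩, h3, h4, h5, h6⟩

lemma run_const {y : ℕ → ℕ} {i j : ℕ}
    (h : ∀ k ∈ Finset.Ico i j, (y k : ℤ) - k = (y (k + 1) : ℤ) - ((k : ℤ) + 1)) :
    ∀ k l, i ≤ k → k ≤ l → l ≤ j → (y k : ℤ) - k = (y l : ℤ) - l := by
  intro k l hik hkl hlj
  induction l, hkl using Nat.le_induction with
  | base => rfl
  | succ l hl ih =>
    have h1 := ih (by omega)
    have h2 := h l (by simp [Finset.mem_Ico]; omega)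
    push_cast at h2 ⊢
    omega

lemma FF_eq {m : ℕ} {y : ℕ → ℕ} {p q : ℕ × ℕ} (hp : p ∈ FF m y) (hq : q ∈ FF m y)
    (h1 : p.1 ≤ q.1) (h2 : q.1 ≤ p.2) : p = q := by
  rw [mem_FF_iff] at hp hq
  obtain ⟨hpm, hp12, hpL, hpR, hpC⟩ := hp
  obtain ⟨hqm, hq12, hqL, hqR, hqC⟩ := hq
  have heq1 : p.1 = q.1 := by
    by_contra hne
    have hq1 : 1 ≤ q.1 := by omega
    rcases hqL with h | h
    · omega
    · have := hpC (q.1 - 1) (by simp [Finset.mem_Ico]; omega)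
      have he : q.1 - 1 + 1 = q.1 := by omega
      rw [he] at this
      omega
  have heq2 : p.2 = q.2 := by
    rcases lt_trichotomy p.2 q.2 with h | h | h
    · rcases hpR with h' | h'
      · omega
      · have := hqC p.2 (by simp [Finset.mem_Ico]; omega)
        omega
    · exact h
    · rcases hqR with h' | h'
      · omega
      · have := hpC q.2 (by simp [Finset.mem_Ico]; omega)
        omega
  exact Prod.ext heq1 heq2

lemma exists_right {m : ℕ} {x x' : ℕ → ℕ} (hx : IsX m x) (hx' : IsX m x') {i : ℕ}
    (him : i ≤ m) (h0 : i = m ∨ x i < x (i + 1) ∨ x' i < x' (i + 1)) :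
    ∃ j, i ≤ j ∧ j ≤ m ∧
      (∀ k ∈ Finset.Ico i j,
        ((x k + x' k : ℕ) : ℤ) - k = ((x (k+1) + x' (k+1) : ℕ) : ℤ) - ((k : ℤ) + 1)) ∧
      (j = m ∨ ((x j + x' j : ℕ) : ℤ) - j < ((x (j+1) + x' (j+1) : ℕ) : ℤ) - ((j : ℤ) + 1)) := by
  obtain ⟨n, hn⟩ : ∃ n, m - i = n := ⟨_, rfl⟩
  induction n generalizing i with
  | zero =>
    exact ⟨i, le_refl i, him, by simp, Or.inl (by omega)⟩
  | succ n ih =>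
    have hi : i < m := by omega
    have hinc : x i < x (i + 1) ∨ x' i < x' (i + 1) := by
      rcases h0 with h | h
      · omega
      · exact h
    have hm1 : x i ≤ x (i + 1) := hx.1 i hi
    have hm2 : x' i ≤ x' (i + 1) := hx'.1 i hi
    rcases lt_trichotomy (x (i+1) + x' (i+1)) (x i + x' i + 1) with h | h | h
    · omega
    · -- equal step: recurse at i+1
      have h0' : i + 1 = m ∨ x (i+1) < x (i+2) ∨ x' (i+1) < x' (i+2) := by
        by_cases hc : i + 1 = m
        · exact Or.inl hc
        · have hxx := hx.2 i (by omega)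
          have hxx' := hx'.2 i (by omega)
          have hm3 : x (i+1) ≤ x (i+2) := hx.1 (i+1) (by omega)
          have hm4 : x' (i+1) ≤ x' (i+2) := hx'.1 (i+1) (by omega)
          omega
      obtain ⟨j, hj1, hj2, hj3, hj4⟩ := ih (by omega) h0' (by omega)
      refine ⟨j, by omega, hj2, ?_, hj4⟩
      intro k hk
      simp [Finset.mem_Ico] at hk
      rcases Nat.eq_or_lt_of_le hk.1 with he | hlt
      · subst he; push_cast; omega
      · exact hj3 k (by simp [Finset.mem_Ico]; omega)
    · -- strict increase: stop at i
      exact ⟨i, le_refl i, him, by simp, Or.inr (by push_cast; omega)⟩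

lemma exists_left {m : ℕ} {x x' : ℕ → ℕ} (hx : IsX m x) (hx' : IsX m x') {i : ℕ}
    (him : i ≤ m) (h0 : i = 0 ∨ x (i - 1) < x i ∨ x' (i - 1) < x' i) :
    ∃ a, a ≤ i ∧
      (∀ k ∈ Finset.Ico a i,
        ((x k + x' k : ℕ) : ℤ) - k = ((x (k+1) + x' (k+1) : ℕ) : ℤ) - ((k : ℤ) + 1)) ∧
      (a = 0 ∨ ((x (a-1) + x' (a-1) : ℕ) : ℤ) - ((a : ℤ) - 1) < ((x a + x' a : ℕ) : ℤ) - a) := by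
  induction i with
  | zero => exact ⟨0, le_refl 0, by simp, Or.inl rfl⟩
  | succ i ih =>
    have hinc : x i < x (i + 1) ∨ x' i < x' (i + 1) := by
      rcases h0 with h | h
      · omega
      · simpa using h
    have hm1 : x i ≤ x (i + 1) := hx.1 i (by omega)
    have hm2 : x' i ≤ x' (i + 1) := hx'.1 i (by omega)
    rcases lt_trichotomy (x (i+1) + x' (i+1)) (x i + x' i + 1) with h | h | h
    · omega
    · -- equal step: recurse at i
      have h0' : i = 0 ∨ x (i - 1) < x i ∨ x' (i - 1) < x' i := by
        by_cases hc : i = 0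
        · exact Or.inl hc
        · have h1 : i - 1 + 2 = i + 1 := by omega
          have hxx := hx.2 (i-1) (by omega)
          have hxx' := hx'.2 (i-1) (by omega)
          rw [h1] at hxx hxx'
          have hm3 : x (i-1) ≤ x (i-1+1) := hx.1 (i-1) (by omega)
          have hm4 : x' (i-1) ≤ x' (i-1+1) := hx'.1 (i-1) (by omega)
          have h2 : i - 1 + 1 = i := by omega
          rw [h2] at hm3 hm4
          omega
      obtain ⟨a, ha1, ha2, ha3⟩ := ih (by omega) h0'
      refine ⟨a, by omega, ?_, ha3⟩
      intro k hk
      simp [Finset.mem_Ico] at hk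
      rcases Nat.lt_or_ge k i with hlt | hge
      · exact ha2 k (by simp [Finset.mem_Ico]; omega)
      · have : k = i := by omega
        subst this; push_cast; omega
    · -- strict increase at step i: stop at a = i+1
      refine ⟨i + 1, le_refl _, by simp, Or.inr ?_⟩
      have : i + 1 - 1 = i := by omega
      rw [this]; push_cast; omega

lemma SS_sub_RR {m : ℕ} {x x' : ℕ → ℕ} (hx : IsX m x) (hx' : IsX m x') :
    SS m x ⊆ RR m (fun i => x i + x' i) := by
  intro i hi
  simp only [SS, Finset.mem_filter, Finset.mem_range] at hi
  obtain ⟨him, hL, hR⟩ := hi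
  simp only [RR, Finset.mem_filter, Finset.mem_range]
  refine ⟨him, ?_⟩
  by_cases hcase : i = 0 ∨ ((x (i-1) + x' (i-1) : ℕ) : ℤ) - ((i : ℤ) - 1) < ((x i + x' i : ℕ) : ℤ) - i
  · -- i is a left endpoint
    obtain ⟨j, hj1, hj2, hj3, hj4⟩ := exists_right hx hx' (by omega)
      (hR.imp_right Or.inl)
    refine ⟨(i, j), ?_, Or.inl rfl⟩
    rw [mem_FF_iff]
    exact ⟨hj2, hj1, hcase, hj4, hj3⟩
  · -- i ≥ 1 and d(i-1) = d i; i is a right endpoint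
    push_neg at hcase
    obtain ⟨hi0, hdle⟩ := hcase
    have hi1 : 1 ≤ i := by omega
    have hxl : x (i-1) < x i := hL.resolve_left hi0
    have hm2 : x' (i-1) ≤ x' (i-1+1) := hx'.1 (i-1) (by omega)
    have h2 : i - 1 + 1 = i := by omega
    rw [h2] at hm2
    -- from d(i-1) ≥ d i (hdle) and y(i-1) < y i we get y i = y(i-1)+1 hence x' flat
    have hflat : x' (i-1) = x' i := by omega
    have hRb : i = m ∨ ((x i + x' i : ℕ) : ℤ) - i < ((x (i+1) + x' (i+1) : ℕ) : ℤ) - ((i:ℤ) + 1) := by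
      by_cases hc : i = m
      · exact Or.inl hc
      · have hxr : x i < x (i+1) := hR.resolve_left hc
        have h1 : i - 1 + 2 = i + 1 := by omega
        have hxx' := hx'.2 (i-1) (by omega)
        rw [h1] at hxx'
        exact Or.inr (by push_cast; omega)
    obtain ⟨a, ha1, ha2, ha3⟩ := exists_left hx hx' (by omega) (Or.inr (Or.inl hxl))
    refine ⟨(a, i), ?_, Or.inr rfl⟩
    rw [mem_FF_iff]
    exact ⟨by omega, ha1, ha3, hRb, ha2⟩

lemma inter_sub_RR0 {m : ℕ} {x x' : ℕ → ℕ} (hx : IsX m x) (hx' : IsX m x') :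
    SS m x ∩ SS m x' ⊆ RR0 m (fun i => x i + x' i) := by
  intro i hi
  simp only [Finset.mem_inter, SS, Finset.mem_filter, Finset.mem_range] at hi
  obtain ⟨⟨him, hL, hR⟩, _, hL', hR'⟩ := hi.imp id id
  simp only [RR0, Finset.mem_filter, Finset.mem_range]
  refine ⟨him, ?_⟩
  rw [mem_FF_iff]
  refine ⟨by omega, le_refl i, ?_, ?_, by simp⟩
  · by_cases h0 : i = 0
    · exact Or.inl h0
    · have h1 : x (i-1) < x i := hL.resolve_left h0
      have h2 : x' (i-1) < x' i := hL'.resolve_left h0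
      exact Or.inr (by push_cast; omega)
  · by_cases h0 : i = m
    · exact Or.inl h0
    · have h1 : x i < x (i+1) := hR.resolve_left h0
      have h2 : x' i < x' (i+1) := hR'.resolve_left h0
      exact Or.inr (by push_cast; omega)

lemma RR_eq_biUnion {m : ℕ} (y : ℕ → ℕ) :
    RR m y = (FF m y).biUnion (fun p => {p.1, p.2}) := by
  ext k
  simp only [RR, Finset.mem_filter, Finset.mem_range, Finset.mem_biUnion, Finset.mem_insert,
    Finset.mem_singleton]
  constructor
  · rintro ⟨-, p, hp, h⟩
    exact ⟨p, hp, h⟩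
  · rintro ⟨p, hp, h⟩
    have h' := mem_FF_iff.mp hp
    exact ⟨by omega, p, hp, h⟩

lemma RR_RR0_card {m : ℕ} (y : ℕ → ℕ) :
    (RR m y).card + (RR0 m y).card = 2 * (FF m y).card := by
  have hdisj : ∀ p ∈ FF m y, ∀ q ∈ FF m y, p ≠ q →
      Disjoint ({p.1, p.2} : Finset ℕ) {q.1, q.2} := by
    intro p hp q hq hne
    rw [Finset.disjoint_left]
    intro k hk1 hk2
    simp only [Finset.mem_insert, Finset.mem_singleton] at hk1 hk2
    have hp' := mem_FF_iff.mp hp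
    have hq' := mem_FF_iff.mp hq
    have hkp : p.1 ≤ k ∧ k ≤ p.2 := by rcases hk1 with h | h <;> omega
    have hkq : q.1 ≤ k ∧ k ≤ q.2 := by rcases hk2 with h | h <;> omega
    rcases le_or_gt p.1 q.1 with h | h
    · exact hne (FF_eq hp hq h (by omega))
    · exact hne (FF_eq hq hp (by omega) (by omega)).symm
  have hRRcard : (RR m y).card = ∑ p ∈ FF m y, ({p.1, p.2} : Finset ℕ).card := by
    rw [RR_eq_biUnion, Finset.card_biUnion hdisj]
  have hRR0card : (RR0 m y).card = ((FF m y).filter (fun p => p.1 = p.2)).card := by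
    have himg : (FF m y).filter (fun p => p.1 = p.2) =
        (RR0 m y).image (fun k => (k, k)) := by
      ext p
      simp only [Finset.mem_filter, Finset.mem_image, RR0, Finset.mem_range]
      constructor
      · rintro ⟨hp, he⟩
        have hpe : (p.1, p.1) = p := Prod.ext rfl he
        have h' := mem_FF_iff.mp hp
        exact ⟨p.1, ⟨by omega, by rw [hpe]; exact hp⟩, hpe⟩
      · rintro ⟨a, ⟨-, hFF⟩, rfl⟩
        exact ⟨hFF, rfl⟩
    rw [himg, Finset.card_image_of_injective _ (fun a b h => congrArg Prod.fst h)]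
  rw [hRRcard, hRR0card, Finset.card_filter]
  have h2 : 2 * (FF m y).card = ∑ _p ∈ FF m y, 2 := by
    rw [Finset.sum_const, smul_eq_mul, mul_comm]
  rw [h2, ← Finset.sum_add_distrib]
  apply Finset.sum_congr rfl
  intro p _
  by_cases h : p.1 = p.2
  · simp [h]
  · rw [if_neg h, Finset.card_pair h]

theorem stmt8 (m : ℕ) (x x' : ℕ → ℕ) (hx : IsX m x) (hx' : IsX m x') :
    (SS m x).card + (SS m x').card ≤ 2 * (FF m (fun i => x i + x' i)).card ∧
    ((SS m x).card + (SS m x').card = 2 * (FF m (fun i => x i + x' i)).card ↔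
      SS m x ∪ SS m x' = RR m (fun i => x i + x' i) ∧
      SS m x ∩ SS m x' = RR0 m (fun i => x i + x' i)) := by
  have hcomm : (fun i => x' i + x i) = (fun i => x i + x' i) := by
    funext i; exact Nat.add_comm _ _
  have h1 : SS m x ⊆ RR m (fun i => x i + x' i) := SS_sub_RR hx hx'
  have h2 : SS m x' ⊆ RR m (fun i => x i + x' i) := by
    have := SS_sub_RR hx' hx
    rwa [hcomm] at this
  have hU : SS m x ∪ SS m x' ⊆ RR m (fun i => x i + x' i) := Finset.union_subset h1 h2
  have hI : SS m x ∩ SS m x' ⊆ RR0 m (fun i => x i + x' i) := inter_sub_RR0 hx hx'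
  have hkey := Finset.card_union_add_card_inter (SS m x) (SS m x')
  have hC := RR_RR0_card (m := m) (fun i => x i + x' i)
  have hcU := Finset.card_le_card hU
  have hcI := Finset.card_le_card hI
  refine ⟨by omega, ?_, ?_⟩
  · intro h
    have e1 : (SS m x ∪ SS m x').card = (RR m (fun i => x i + x' i)).card := by omega
    have e2 : (SS m x ∩ SS m x').card = (RR0 m (fun i => x i + x' i)).card := by omega
    exact ⟨Finset.eq_of_subset_of_card_le hU (le_of_eq e1.symm),
      Finset.eq_of_subset_of_card_le hI (le_of_eq e2.symm)⟩
  · rintro ⟨ha, hb⟩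
    rw [ha, hb] at hkey
    omega
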